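/- There is a countably infinite point set P ⊆ ℝ² in general position except for collinear triples (no 4 collinear) such that every pair of points of P that is visible with respect to P lies in a collinear triple of P. -/

import Mathlib

noncomputable section GreedyVis

namespace GreedyVis

/-- Determinant test for collinearity of three points in the plane. -/
def det3 (a b c : ℝ × ℝ) : ℝ := (b.1 - a.1) * (c.2 - a.2) - (b.2 - a.2) * (c.1 - a.1)

lemma collinear_iff_det3 {a b c : ℝ × ℝ} (hab : a ≠ b) :
    Collinear ℝ ({a, b, c} : Set (ℝ × ℝ)) ↔ det3 a b c = 0 := by
  constructor
  · intro h
    rw [collinear_iff_exists_forall_eq_smul_vadd] at h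
    obtain ⟨p₀, v, hv⟩ := h
    obtain ⟨ra, ha⟩ := hv a (by simp)
    obtain ⟨rb, hb⟩ := hv b (by simp)
    obtain ⟨rc, hc⟩ := hv c (by simp)
    subst ha hb hc
    simp only [det3, vadd_eq_add, Prod.fst_add, Prod.snd_add, Prod.smul_fst, Prod.smul_snd,
      smul_eq_mul]
    ring
  · intro h
    rw [collinear_iff_exists_forall_eq_smul_vadd]
    refine ⟨a, b - a, ?_⟩
    intro p hp
    simp only [Set.mem_insert_iff, Set.mem_singleton_iff] at hp
    rcases hp with rfl | rfl | rfl
    · exact ⟨0, by simp⟩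
    · exact ⟨1, by simp⟩
    · by_cases h1 : b.1 - a.1 = 0
      · have h2 : b.2 - a.2 ≠ 0 := by
          intro h2
          exact hab (Prod.ext (by linarith) (by linarith)).symm
        refine ⟨(p.2 - a.2) / (b.2 - a.2), ?_⟩
        have hc1 : p.1 = a.1 := by
          simp only [det3] at h
          have : (b.2 - a.2) * (p.1 - a.1) = 0 := by linear_combination (p.2 - a.2) * h1 - h
          rcases mul_eq_zero.mp this with h' | h'
          · exact absurd h' h2
          · linarith
        refine Prod.ext ?_ ?_ |>.symm
        · simp only [vadd_eq_add, Prod.fst_add, Prod.smul_fst, Prod.fst_sub, smul_eq_mul]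
          rw [h1]; simpa using hc1.symm
        · simp only [vadd_eq_add, Prod.snd_add, Prod.smul_snd, Prod.snd_sub, smul_eq_mul]
          field_simp; ring
      · refine ⟨(p.1 - a.1) / (b.1 - a.1), ?_⟩
        refine Prod.ext ?_ ?_ |>.symm
        · simp only [vadd_eq_add, Prod.fst_add, Prod.smul_fst, Prod.fst_sub, smul_eq_mul]
          field_simp; ring
        · simp only [vadd_eq_add, Prod.snd_add, Prod.smul_snd, Prod.snd_sub, smul_eq_mul]
          simp only [det3] at h
          field_simp
          nlinarith [h]


lemma det3_lineMap (a b v w : ℝ × ℝ) (t : ℝ) :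
    det3 a b (v + t • (w - v)) = (1 - t) * det3 a b v + t * det3 a b w := by
  simp only [det3, Prod.fst_add, Prod.snd_add, Prod.smul_fst, Prod.smul_snd, Prod.fst_sub,
    Prod.snd_sub, smul_eq_mul]
  ring

lemma finite_quad {A B C : ℝ} (h : ¬ (A = 0 ∧ B = 0)) :
    {t : ℝ | A * t ^ 2 + B * t + C = 0}.Finite := by
  have hp : (Polynomial.C A * Polynomial.X ^ 2 + Polynomial.C B * Polynomial.X
      + Polynomial.C C : Polynomial ℝ) ≠ 0 := by
    intro hp
    apply h
    constructor
    · have h2 := congrArg (fun q : Polynomial ℝ => q.coeff 2) hp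
      simpa [Polynomial.coeff_C] using h2
    · have h1 := congrArg (fun q : Polynomial ℝ => q.coeff 1) hp
      simpa [Polynomial.coeff_C] using h1
  have hfin := Polynomial.finite_setOf_isRoot hp
  apply Set.Finite.subset hfin
  intro t ht
  simp only [Set.mem_setOf_eq, Polynomial.IsRoot, Polynomial.eval_add, Polynomial.eval_mul,
    Polynomial.eval_pow, Polynomial.eval_C, Polynomial.eval_X]
  exact ht

lemma finite_lin {A B : ℝ} (h : ¬ (A = 0 ∧ B = 0)) :
    {t : ℝ | A * t + B = 0}.Finite := by
  rcases eq_or_ne A 0 with hA | hA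
  · have hB : B ≠ 0 := fun hB => h ⟨hA, hB⟩
    have : {t : ℝ | A * t + B = 0} = ∅ := by
      ext t; simp [hA, hB]
    rw [this]; exact Set.finite_empty
  · apply Set.Finite.subset (Set.finite_singleton (-B / A))
    intro t ht
    simp only [Set.mem_setOf_eq] at ht
    simp only [Set.mem_singleton_iff]
    field_simp
    linarith

lemma collinear_of_mem_openSegment {v w z : ℝ × ℝ} (h : z ∈ openSegment ℝ v w) :
    Collinear ℝ ({v, w, z} : Set (ℝ × ℝ)) := by
  rcases eq_or_ne v w with rfl | hvw
  · rw [openSegment_same] at h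
    simp only [Set.mem_singleton_iff] at h
    subst h
    simp [Set.insert_comm, Set.pair_eq_singleton, collinear_singleton]
  · rw [openSegment_eq_image'] at h
    obtain ⟨t, _, rfl⟩ := h
    rw [collinear_iff_det3 hvw, det3_lineMap]
    have h1 : det3 v w v = 0 := by simp only [det3]; ring
    have h2 : det3 v w w = 0 := by simp only [det3]; ring
    rw [h1, h2]; ring

lemma exists_generic (F : Finset (ℝ × ℝ)) :
    ∃ z : ℝ × ℝ, z ∉ F ∧ ∀ a ∈ F, ∀ b ∈ F, a ≠ b →
      ¬ Collinear ℝ ({a, b, z} : Set (ℝ × ℝ)) := by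
  set bad : Set ℝ :=
    {t | (t, t ^ 2) ∈ (F : Set (ℝ × ℝ))} ∪
      ⋃ a ∈ F, ⋃ b ∈ F, {t | a ≠ b ∧ det3 a b (t, t ^ 2) = 0} with hbad
  have hfin : bad.Finite := by
    apply Set.Finite.union
    · apply Set.Finite.preimage ?_ F.finite_toSet
      intro x _ y _ hxy
      exact congrArg Prod.fst hxy
    · apply Set.Finite.biUnion F.finite_toSet; intro a _
      apply Set.Finite.biUnion F.finite_toSet; intro b _
      by_cases hab : a = b
      · have : {t : ℝ | a ≠ b ∧ det3 a b (t, t ^ 2) = 0} = ∅ := by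
          ext t; simp [hab]
        rw [this]; exact Set.finite_empty
      · have hsub : {t : ℝ | a ≠ b ∧ det3 a b (t, t ^ 2) = 0} ⊆
            {t : ℝ | (b.1 - a.1) * t ^ 2 + (-(b.2 - a.2)) * t
              + ((b.2 - a.2) * a.1 - (b.1 - a.1) * a.2) = 0} := by
          intro t ht
          obtain ⟨-, ht⟩ := ht
          simp only [det3] at ht
          simp only [Set.mem_setOf_eq]
          linear_combination ht
        apply Set.Finite.subset (finite_quad ?_) hsub
        rintro ⟨h1, h2⟩
        exact hab (Prod.ext (by linarith) (by linarith)).symm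
  obtain ⟨t, ht⟩ := hfin.infinite_compl.nonempty
  refine ⟨(t, t ^ 2), fun hmem => ht (Or.inl hmem), ?_⟩
  intro a ha b hb hab hcol
  apply ht
  right
  refine Set.mem_biUnion ha (Set.mem_biUnion hb ?_)
  exact ⟨hab, (collinear_iff_det3 hab).mp hcol⟩

lemma exists_seg (F : Finset (ℝ × ℝ)) {v w : ℝ × ℝ} (hvw : v ≠ w) :
    ∃ z ∈ openSegment ℝ v w, ∀ a ∈ F, ∀ b ∈ F, a ≠ b →
      Collinear ℝ ({a, b, z} : Set (ℝ × ℝ)) →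
      Collinear ℝ ({a, b, v} : Set (ℝ × ℝ)) ∧ Collinear ℝ ({a, b, w} : Set (ℝ × ℝ)) := by
  set bad : Set ℝ := ⋃ a ∈ F, ⋃ b ∈ F,
    {t | ¬ (det3 a b v = 0 ∧ det3 a b w = 0) ∧ det3 a b (v + t • (w - v)) = 0} with hbad
  have hfin : bad.Finite := by
    apply Set.Finite.biUnion F.finite_toSet; intro a _
    apply Set.Finite.biUnion F.finite_toSet; intro b _
    by_cases hd : det3 a b v = 0 ∧ det3 a b w = 0
    · have : {t : ℝ | ¬ (det3 a b v = 0 ∧ det3 a b w = 0)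
          ∧ det3 a b (v + t • (w - v)) = 0} = ∅ := by
        ext t; simp [hd]
      rw [this]; exact Set.finite_empty
    · have hsub : {t : ℝ | ¬ (det3 a b v = 0 ∧ det3 a b w = 0)
          ∧ det3 a b (v + t • (w - v)) = 0} ⊆
          {t : ℝ | (det3 a b w - det3 a b v) * t + det3 a b v = 0} := by
        intro t ht
        obtain ⟨-, ht⟩ := ht
        rw [det3_lineMap] at ht
        simp only [Set.mem_setOf_eq]
        linear_combination ht
      apply Set.Finite.subset (finite_lin ?_) hsub
      rintro ⟨h1, h2⟩
      exact hd ⟨h2, by linarith⟩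
  have hIoo : ((Set.Ioo (0:ℝ) 1) \ bad).Infinite :=
    (Set.Ioo_infinite (by norm_num)).diff hfin
  obtain ⟨t, htIoo, htbad⟩ := hIoo.nonempty
  refine ⟨v + t • (w - v), ?_, ?_⟩
  · rw [openSegment_eq_image']
    exact ⟨t, htIoo, rfl⟩
  · intro a ha b hb hab hcol
    by_contra hnc
    apply htbad
    refine Set.mem_biUnion ha (Set.mem_biUnion hb ?_)
    constructor
    · intro ⟨h1, h2⟩
      exact hnc ⟨(collinear_iff_det3 hab).mpr h1, (collinear_iff_det3 hab).mpr h2⟩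
    · exact (collinear_iff_det3 hab).mp hcol


attribute [local instance] Classical.propDecidable

/-- The pair `(v, w)` still needs a witness among `l`. -/
def Good (l : List (ℝ × ℝ)) (v w : ℝ × ℝ) : Prop :=
  v ≠ w ∧ ∀ u ∈ l, u = v ∨ u = w ∨ ¬ Collinear ℝ ({v, w, u} : Set (ℝ × ℝ))

noncomputable def pick (l : List (ℝ × ℝ)) (v w : ℝ × ℝ) : ℝ × ℝ :=
  if h : Good l v w then (exists_seg l.toFinset h.1).choose
  else (exists_generic l.toFinset).choose

lemma pick_spec_seg {l : List (ℝ × ℝ)} {v w : ℝ × ℝ} (h : Good l v w) :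
    pick l v w ∈ openSegment ℝ v w ∧ ∀ a ∈ l, ∀ b ∈ l, a ≠ b →
      Collinear ℝ ({a, b, pick l v w} : Set (ℝ × ℝ)) →
      Collinear ℝ ({a, b, v} : Set (ℝ × ℝ)) ∧ Collinear ℝ ({a, b, w} : Set (ℝ × ℝ)) := by
  unfold pick
  rw [dif_pos h]
  obtain ⟨hmem, hav⟩ := (exists_seg l.toFinset h.1).choose_spec
  exact ⟨hmem, fun a ha b hb hab hc =>
    hav a (List.mem_toFinset.mpr ha) b (List.mem_toFinset.mpr hb) hab hc⟩

lemma pick_spec_gen {l : List (ℝ × ℝ)} {v w : ℝ × ℝ} (h : ¬ Good l v w) :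
    pick l v w ∉ l ∧ ∀ a ∈ l, ∀ b ∈ l, a ≠ b →
      ¬ Collinear ℝ ({a, b, pick l v w} : Set (ℝ × ℝ)) := by
  unfold pick
  rw [dif_neg h]
  obtain ⟨hmem, hav⟩ := (exists_generic l.toFinset).choose_spec
  exact ⟨fun hc => hmem (List.mem_toFinset.mpr hc), fun a ha b hb hab hc =>
    hav a (List.mem_toFinset.mpr ha) b (List.mem_toFinset.mpr hb) hab hc⟩

noncomputable def step (l : List (ℝ × ℝ)) (n : ℕ) : ℝ × ℝ :=
  if n = 0 then (0, 0) else if n = 1 then (1, 0)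
  else pick l (l.getD (Nat.unpair (n - 2)).1 (0, 0)) (l.getD (Nat.unpair (n - 2)).2 (0, 0))

noncomputable def prefixList : ℕ → List (ℝ × ℝ)
  | 0 => []
  | n + 1 => prefixList n ++ [step (prefixList n) n]

noncomputable def seq (n : ℕ) : ℝ × ℝ := step (prefixList n) n

noncomputable def vtx (n : ℕ) : ℝ × ℝ := (prefixList n).getD (Nat.unpair (n - 2)).1 (0, 0)
noncomputable def wtx (n : ℕ) : ℝ × ℝ := (prefixList n).getD (Nat.unpair (n - 2)).2 (0, 0)

lemma seq_eq_pick {n : ℕ} (hn : 2 ≤ n) : seq n = pick (prefixList n) (vtx n) (wtx n) := by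
  unfold seq step vtx wtx
  rw [if_neg (by omega), if_neg (by omega)]

lemma prefixList_succ (n : ℕ) : prefixList (n + 1) = prefixList n ++ [seq n] := rfl

lemma length_prefixList (n : ℕ) : (prefixList n).length = n := by
  induction n with
  | zero => rfl
  | succ n ih => simp [prefixList_succ, ih]

lemma mem_prefixList {u : ℝ × ℝ} {n : ℕ} : u ∈ prefixList n ↔ ∃ m, m < n ∧ seq m = u := by
  induction n with
  | zero => simp [prefixList]
  | succ n ih =>
    simp only [prefixList_succ, List.mem_append, List.mem_singleton, ih]
    constructor
    · rintro (⟨m, hm, rfl⟩ | rfl)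
      · exact ⟨m, by omega, rfl⟩
      · exact ⟨n, by omega, rfl⟩
    · rintro ⟨m, hm, rfl⟩
      rcases Nat.lt_succ_iff_lt_or_eq.mp hm with h | rfl
      · exact Or.inl ⟨m, h, rfl⟩
      · exact Or.inr rfl

lemma getD_prefixList : ∀ {n m : ℕ}, m < n → (prefixList n).getD m (0, 0) = seq m := by
  intro n
  induction n with
  | zero => intro m hm; omega
  | succ n ih =>
    intro m hm
    rw [prefixList_succ]
    rcases Nat.lt_succ_iff_lt_or_eq.mp hm with h | rfl
    · rw [List.getD_append _ _ _ _ (by rw [length_prefixList]; exact h)]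
      exact ih h
    · rw [List.getD_append_right _ _ _ _ (by rw [length_prefixList])]
      simp [length_prefixList]

lemma seq_notmem (n : ℕ) : seq n ∉ prefixList n := by
  intro hmem
  match n with
  | 0 => simp [prefixList] at hmem
  | 1 =>
    have h1 : seq 1 = (1, 0) := by unfold seq step; norm_num
    have h0 : prefixList 1 = [(0, 0)] := by
      have : seq 0 = (0, 0) := by unfold seq step; norm_num
      rw [show (1 : ℕ) = 0 + 1 from rfl, prefixList_succ, this]; rfl
    rw [h1, h0] at hmem
    simp at hmem
  | (n + 2) =>
    rw [seq_eq_pick (by omega)] at hmem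
    by_cases hg : Good (prefixList (n + 2)) (vtx (n + 2)) (wtx (n + 2))
    · obtain ⟨hseg, -⟩ := pick_spec_seg hg
      rcases hg.2 _ hmem with h | h | h
      · rw [h, left_mem_openSegment_iff] at hseg
        exact hg.1 hseg
      · rw [h, right_mem_openSegment_iff] at hseg
        exact hg.1 hseg
      · exact h (collinear_of_mem_openSegment hseg)
    · exact (pick_spec_gen hg).1 hmem

lemma noFour : ∀ n, ∀ a ∈ prefixList n, ∀ b ∈ prefixList n, ∀ c ∈ prefixList n,
    ∀ d ∈ prefixList n,
    a ≠ b → a ≠ c → a ≠ d → b ≠ c → b ≠ d → c ≠ d →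
    ¬ Collinear ℝ ({a, b, c, d} : Set (ℝ × ℝ)) := by
  intro n
  induction n with
  | zero => intro a ha; simp [prefixList] at ha
  | succ n ih =>
    have aux : ∀ p ∈ prefixList n, ∀ q ∈ prefixList n, ∀ r ∈ prefixList n,
        p ≠ q → p ≠ r → q ≠ r →
        ¬ Collinear ℝ (insert (seq n) {p, q, r} : Set (ℝ × ℝ)) := by
      intro p hp q hq r hr hpq hpr hqr hcol
      have hn : 2 ≤ n := by
        by_contra h'
        obtain ⟨mp, hmp, hp'⟩ := mem_prefixList.mp hp
        obtain ⟨mq, hmq, hq'⟩ := mem_prefixList.mp hq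
        exact hpq (by rw [← hp', ← hq', show mp = mq by omega])
      have hpqz : Collinear ℝ ({p, q, seq n} : Set (ℝ × ℝ)) :=
        Collinear.subset (by intro x hx; simp at hx ⊢; tauto) hcol
      have hpqr : Collinear ℝ ({p, q, r} : Set (ℝ × ℝ)) :=
        Collinear.subset (by intro x hx; simp at hx ⊢; tauto) hcol
      by_cases hg : Good (prefixList n) (vtx n) (wtx n)
      · obtain ⟨-, hav⟩ := pick_spec_seg hg
        rw [← seq_eq_pick hn] at hav
        obtain ⟨hv, hw⟩ := hav p hp q hq hpq hpqz
        have hvs : vtx n ∈ affineSpan ℝ ({p, q} : Set (ℝ × ℝ)) :=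
          hv.mem_affineSpan_of_mem_of_ne (by simp) (by simp) (by simp) hpq
        have hws : wtx n ∈ affineSpan ℝ ({p, q} : Set (ℝ × ℝ)) :=
          hw.mem_affineSpan_of_mem_of_ne (by simp) (by simp) (by simp) hpq
        have hrs : r ∈ affineSpan ℝ ({p, q} : Set (ℝ × ℝ)) :=
          hpqr.mem_affineSpan_of_mem_of_ne (by simp) (by simp) (by simp) hpq
        have hbig : Collinear ℝ ({vtx n, wtx n, r, p, q} : Set (ℝ × ℝ)) :=
          collinear_insert_insert_insert_of_mem_affineSpan_pair hvs hws hrs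
        have key : ∀ s ∈ prefixList n, Collinear ℝ ({vtx n, wtx n, s} : Set (ℝ × ℝ)) →
            s = vtx n ∨ s = wtx n := by
          intro s hs hc
          rcases hg.2 s hs with h | h | h
          · exact Or.inl h
          · exact Or.inr h
          · exact absurd hc h
        have cp := key p hp (Collinear.subset (by intro x hx; simp at hx ⊢; tauto) hbig)
        have cq := key q hq (Collinear.subset (by intro x hx; simp at hx ⊢; tauto) hbig)
        have cr := key r hr (Collinear.subset (by intro x hx; simp at hx ⊢; tauto) hbig)
        rcases cp with h1 | h1 <;> rcases cq with h2 | h2 <;> rcases cr with h3 | h3 <;>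
          first
            | exact hpq (h1.trans h2.symm)
            | exact hpr (h1.trans h3.symm)
            | exact hqr (h2.trans h3.symm)
      · obtain ⟨-, hav⟩ := pick_spec_gen hg
        rw [← seq_eq_pick hn] at hav
        exact hav p hp q hq hpq hpqz
    intro a ha b hb c hc d hd hab hac had hbc hbd hcd hcol
    rw [prefixList_succ] at ha hb hc hd
    simp only [List.mem_append, List.mem_singleton] at ha hb hc hd
    rcases ha with ha | ha
    · rcases hb with hb | hb
      · rcases hc with hc | hc
        · rcases hd with hd | hd
          · exact ih a ha b hb c hc d hd hab hac had hbc hbd hcd hcol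
          · subst hd
            rw [Set.pair_comm c (seq n), Set.insert_comm b (seq n),
              Set.insert_comm a (seq n)] at hcol
            exact aux a ha b hb c hc hab hac hbc hcol
        · subst hc
          rcases hd with hd | hd
          · rw [Set.insert_comm b (seq n), Set.insert_comm a (seq n)] at hcol
            exact aux a ha b hb d hd hab had hbd hcol
          · exact hcd hd.symm
      · subst hb
        rcases hc with hc | hc
        · rcases hd with hd | hd
          · rw [Set.insert_comm a (seq n)] at hcol
            exact aux a ha c hc d hd hac had hcd hcol
          · exact hbd hd.symm
        · exact hbc hc.symm
    · subst ha
      rcases hb with hb | hb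
      · rcases hc with hc | hc
        · rcases hd with hd | hd
          · exact aux b hb c hc d hd hbc hbd hcd hcol
          · exact had hd.symm
        · exact hac hc.symm
      · exact hab hb.symm

end GreedyVis

end GreedyVis  -- close section

/-- `v` and `w` are visible with respect to `P`: they are distinct and no point of `P`
lies in the open segment between them. -/
def Visible (P : Set (ℝ × ℝ)) (v w : ℝ × ℝ) : Prop :=
  v ≠ w ∧ ∀ p ∈ P, p ∉ openSegment ℝ v w

/-- `P` contains no 4 collinear points. -/
def No4Collinear (P : Set (ℝ × ℝ)) : Prop :=
  ∀ a ∈ P, ∀ b ∈ P, ∀ c ∈ P, ∀ d ∈ P,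
    a ≠ b → a ≠ c → a ≠ d → b ≠ c → b ≠ d → c ≠ d →
    ¬ Collinear ℝ ({a, b, c, d} : Set (ℝ × ℝ))

theorem stmt15 :
    ∃ P : Set (ℝ × ℝ), P.Countable ∧ P.Infinite ∧ No4Collinear P ∧
      ∀ v ∈ P, ∀ w ∈ P, v ≠ w → Visible P v w →
        ∃ u ∈ P, u ≠ v ∧ u ≠ w ∧ Collinear ℝ ({v, w, u} : Set (ℝ × ℝ)) := by
  classical
  open GreedyVis in
  refine ⟨Set.range GreedyVis.seq, Set.countable_range _, ?_, ?_, ?_⟩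
  · apply Set.infinite_range_of_injective
    intro m n hmn
    by_contra hne
    rcases lt_or_gt_of_ne hne with h | h
    · exact GreedyVis.seq_notmem n (GreedyVis.mem_prefixList.mpr ⟨m, h, hmn⟩)
    · exact GreedyVis.seq_notmem m (GreedyVis.mem_prefixList.mpr ⟨n, h, hmn.symm⟩)
  · intro a ha b hb c hc d hd hab hac had hbc hbd hcd
    obtain ⟨ia, rfl⟩ := ha
    obtain ⟨ib, rfl⟩ := hb
    obtain ⟨ic, rfl⟩ := hc
    obtain ⟨id, rfl⟩ := hd
    exact GreedyVis.noFour (ia + ib + ic + id + 1)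
      _ (GreedyVis.mem_prefixList.mpr ⟨ia, by omega, rfl⟩)
      _ (GreedyVis.mem_prefixList.mpr ⟨ib, by omega, rfl⟩)
      _ (GreedyVis.mem_prefixList.mpr ⟨ic, by omega, rfl⟩)
      _ (GreedyVis.mem_prefixList.mpr ⟨id, by omega, rfl⟩)
      hab hac had hbc hbd hcd
  · intro v hv w hw hvw _
    obtain ⟨i, rfl⟩ := hv
    obtain ⟨j, rfl⟩ := hw
    set n := Nat.pair i j + 2 with hn
    have h2 : 2 ≤ n := by omega
    have hvtx : GreedyVis.vtx n = GreedyVis.seq i := by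
      rw [GreedyVis.vtx, show n - 2 = Nat.pair i j by omega, Nat.unpair_pair]
      exact GreedyVis.getD_prefixList (lt_of_le_of_lt (Nat.left_le_pair i j) (by omega))
    have hwtx : GreedyVis.wtx n = GreedyVis.seq j := by
      rw [GreedyVis.wtx, show n - 2 = Nat.pair i j by omega, Nat.unpair_pair]
      exact GreedyVis.getD_prefixList (lt_of_le_of_lt (Nat.right_le_pair i j) (by omega))
    by_cases hg : GreedyVis.Good (GreedyVis.prefixList n) (GreedyVis.vtx n) (GreedyVis.wtx n)
    · obtain ⟨hseg, -⟩ := GreedyVis.pick_spec_seg hg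
      rw [← GreedyVis.seq_eq_pick h2, hvtx, hwtx] at hseg
      refine ⟨GreedyVis.seq n, ⟨n, rfl⟩, ?_, ?_, ?_⟩
      · intro h
        rw [h, left_mem_openSegment_iff] at hseg
        exact hvw hseg
      · intro h
        rw [h, right_mem_openSegment_iff] at hseg
        exact hvw hseg
      · exact GreedyVis.collinear_of_mem_openSegment hseg
    · rw [GreedyVis.Good] at hg
      push_neg at hg
      obtain ⟨u, hu, hu1, hu2, hu3⟩ := hg (by rw [hvtx, hwtx]; exact hvw)
      rw [hvtx] at hu1 hu3
      rw [hwtx] at hu2 hu3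
      obtain ⟨m, -, rfl⟩ := GreedyVis.mem_prefixList.mp hu
      exact ⟨GreedyVis.seq m, ⟨m, rfl⟩, hu1, hu2, hu3⟩
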